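/- For all n ≥ 0: s(4n) = 2s(n) − a(n), s(4n+1) = 2s(n), s(4n+3) = 2s(n), and s(4n+2) = 2s(n) + (-1)^n · a(n). -/
import Mathlib


def rs : ℕ → ℤ
  | 0 => 1
  | (n+1) =>
    if (n+1) % 2 = 0 then rs ((n+1)/2)
    else (-1)^((n+1)/2) * rs ((n+1)/2)
decreasing_by all_goals exact Nat.div_lt_self (Nat.succ_pos n) (by norm_num)

def s (n : ℕ) : ℤ := ∑ i ∈ Finset.range (n+1), rs i

def t (n : ℕ) : ℤ := ∑ i ∈ Finset.range (n+1), (-1)^i * rs i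

lemma rs_even (n : ℕ) : rs (2*n) = rs n := by
  cases n with
  | zero => rfl
  | succ m =>
    show rs (2*m+1+1) = rs (m+1)
    rw [rs]
    have h1 : (2*m+1+1) % 2 = 0 := by omega
    have h2 : (2*m+1+1) / 2 = m+1 := by omega
    simp [h1, h2]

lemma rs_odd (n : ℕ) : rs (2*n+1) = (-1)^n * rs n := by
  rw [show 2*n+1 = (2*n)+1 from rfl, rs]
  have h1 : (2*n+1) % 2 ≠ 0 := by omega
  have h2 : (2*n+1) / 2 = n := by omega
  simp [h1, h2]

lemma st_odd (n : ℕ) : s (2*n+1) = s n + t n ∧ t (2*n+1) = s n - t n := by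
  induction n with
  | zero =>
    have h0 : rs 0 = 1 := by rw [rs]
    have h1 : rs 1 = 1 := by rw [rs]; norm_num [h0]
    constructor <;> simp [s, t, Finset.sum_range_succ, h0, h1]
  | succ m ih =>
    have e1 : 2*(m+1)+1 = (2*m+1)+1+1 := by ring
    have hs : s (2*(m+1)+1) = s (2*m+1) + rs (2*m+2) + rs (2*m+3) := by
      rw [e1]; simp [s, Finset.sum_range_succ]
    have ht : t (2*(m+1)+1) = t (2*m+1) + rs (2*m+2) - rs (2*m+3) := by
      rw [e1]; simp [t, Finset.sum_range_succ, pow_succ, pow_mul]; ring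
    have h2 : rs (2*m+2) = rs (m+1) := by
      have := rs_even (m+1); simpa [Nat.mul_succ] using this
    have h3 : rs (2*m+3) = (-1)^(m+1) * rs (m+1) := by
      have := rs_odd (m+1); simpa [Nat.mul_succ] using this
    have hsm : s (m+1) = s m + rs (m+1) := by simp [s, Finset.sum_range_succ]
    have htm : t (m+1) = t m + (-1)^(m+1) * rs (m+1) := by
      simp [t, Finset.sum_range_succ]
    constructor
    · rw [hs, ih.1, h2, h3, hsm, htm]; ring
    · rw [ht, ih.2, h2, h3, hsm, htm]; ring

theorem stmt3 : ∀ n : ℕ,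
    s (4*n) = 2 * s n - rs n ∧
    s (4*n+1) = 2 * s n ∧
    s (4*n+3) = 2 * s n ∧
    s (4*n+2) = 2 * s n + (-1)^n * rs n := by
  intro n
  have h1 : s (4*n+1) = s (2*n) + t (2*n) := by
    have := (st_odd (2*n)).1; rw [show 2*(2*n)+1 = 4*n+1 by ring] at this; exact this
  have hs2 : s (2*n+1) = s (2*n) + rs (2*n+1) := by simp [s, Finset.sum_range_succ]
  have ht2 : t (2*n+1) = t (2*n) + (-1)^(2*n+1) * rs (2*n+1) := by
    simp [t, Finset.sum_range_succ]
  have ho := st_odd n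
  have hsn : s (2*n) = s n + t n - (-1)^n * rs n := by
    have := ho.1; rw [hs2, rs_odd] at this; linarith
  have htn : t (2*n) = s n - t n + (-1)^n * rs n := by
    have := ho.2; rw [ht2, rs_odd] at this
    have hp : ((-1:ℤ))^(2*n+1) = -1 := by
      rw [pow_succ, pow_mul]; norm_num
    rw [hp] at this; linarith
  have key1 : s (4*n+1) = 2 * s n := by rw [h1, hsn, htn]; ring
  have e0 : s (4*n+1) = s (4*n) + rs (4*n+1) := by simp [s, Finset.sum_range_succ]
  have r1' : rs (4*n+1) = rs n := by
    rw [show 4*n+1 = 2*(2*n)+1 by ring, rs_odd, rs_even]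
    rw [show ((-1:ℤ))^(2*n) = 1 by rw [pow_mul]; norm_num]
    ring
  have e2 : s (4*n+2) = s (4*n+1) + rs (4*n+2) := by simp [s, Finset.sum_range_succ]
  have r2 : rs (4*n+2) = (-1)^n * rs n := by
    rw [show 4*n+2 = 2*(2*n+1) by ring, rs_even, rs_odd]
  have e3 : s (4*n+3) = s (4*n+2) + rs (4*n+3) := by
    simp [s, show 4*n+3+1 = (4*n+2+1)+1 by ring, Finset.sum_range_succ]
  have r3 : rs (4*n+3) = -((-1)^n * rs n) := by
    rw [show 4*n+3 = 2*(2*n+1)+1 by ring, rs_odd, rs_odd]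
    rw [show ((-1:ℤ))^(2*n+1) = -1 by rw [pow_succ, pow_mul]; norm_num]
    ring
  refine ⟨by rw [e0, r1'] at key1; linarith, key1, ?_, ?_⟩
  · rw [e3, e2, key1, r2, r3]; ring
  · rw [e2, key1, r2]
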